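/- Let (P, ≼, ∧, ∨) be a locally finite lattice with least element 0̂, let f be a semimultiplicative complex-valued function on P with f(x) ≠ 0 for all x ∈ P, and let S = {x_1, …, x_n} be a finite lower closed subset of P with distinct elements, indexed so that x_i ≼ x_j only if i ≤ j. Assume d_i = ∑_{z ≼ x_i, z ⋠ x_j for all j < i} (f_d * μ)(0̂, z) ≠ 0 for all i. Then every (S)_f-eigenvalue λ ∈ ℂ of [S]_f satisfies |λ| ≤ C_f · m_f⁻¹ · F_{n+1} (F_{n+3} − 2), where C_f = max_{1≤i,j≤n} |f(x_i ∨ x_j)|, m_f = min_{1≤i≤n} |d_i|, and (F_k) is the Fibonacci sequence with F_1 = F_2 = 1 and F_{k+2} = F_k + F_{k+1}. -/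

import Mathlib

set_option linter.unusedSectionVars false
set_option maxHeartbeats 1000000

open Matrix Finset

/-! ### Abstract Fibonacci bound for inverses of 0-1 unitriangular systems -/

lemma fib_inv_aux (b : ℕ → ℝ) (hb0 : b 0 = 1)
    (hb : ∀ t, 1 ≤ t → ∃ e : ℕ → ℝ, (∀ s, e s = 0 ∨ e s = 1) ∧
      b t = -∑ s ∈ Finset.range t, e s * b s) :
    ∀ i, (max (∑ k ∈ Finset.range (i+1), (b k)⁺) (∑ k ∈ Finset.range (i+1), (b k)⁻)
        ≤ Nat.fib (i+1)) ∧
      (∑ k ∈ Finset.range (i+1), (b k)⁺) + (∑ k ∈ Finset.range (i+1), (b k)⁻)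
        ≤ Nat.fib (i+2) := by
  intro i
  induction i with
  | zero =>
    simp [hb0, Nat.fib_one, Nat.fib_two]
  | succ i ih =>
    obtain ⟨hmax, hsum⟩ := ih
    set u := ∑ k ∈ Finset.range (i+1), (b k)⁺ with hu
    set v := ∑ k ∈ Finset.range (i+1), (b k)⁻ with hv
    have hu0 : 0 ≤ u := Finset.sum_nonneg fun k _ => posPart_nonneg _
    have hv0 : 0 ≤ v := Finset.sum_nonneg fun k _ => negPart_nonneg _
    have hufib : u ≤ Nat.fib (i+1) := le_trans (le_max_left _ _) hmax
    have hvfib : v ≤ Nat.fib (i+1) := le_trans (le_max_right _ _) hmax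
    obtain ⟨e, he, heq⟩ := hb (i+1) (Nat.succ_le_succ (Nat.zero_le _))
    have hup : b (i+1) ≤ v := by
      rw [heq, ← Finset.sum_neg_distrib]
      refine Finset.sum_le_sum fun s _ => ?_
      rcases he s with h | h <;> simp [h, negPart_nonneg, neg_le_negPart]
    have hdn : -b (i+1) ≤ u := by
      rw [heq, neg_neg]
      refine Finset.sum_le_sum fun s _ => ?_
      rcases he s with h | h <;> simp [h, posPart_nonneg, le_posPart]
    have h1 : (b (i+1))⁺ ≤ v := by
      rcases le_total (b (i+1)) 0 with h | h
      · rw [posPart_eq_zero.mpr h]; exact hv0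
      · rw [posPart_eq_self.mpr h]; exact hup
    have h2 : (b (i+1))⁻ ≤ u := by
      rcases le_total 0 (b (i+1)) with h | h
      · rw [negPart_eq_zero.mpr h]; exact hu0
      · rw [negPart_eq_neg.mpr h]; exact hdn
    have hfib3 : (Nat.fib (i+3) : ℝ) = Nat.fib (i+1) + Nat.fib (i+2) := by
      have := Nat.fib_add_two (n := i+1)
      push_cast [this]; ring
    rw [show ∑ k ∈ Finset.range (i+1+1), (b k)⁺ = u + (b (i+1))⁺ by
          rw [Finset.sum_range_succ, hu],
        show ∑ k ∈ Finset.range (i+1+1), (b k)⁻ = v + (b (i+1))⁻ by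
          rw [Finset.sum_range_succ, hv]]
    rcases le_total 0 (b (i+1)) with h | h
    · have hq : (b (i+1))⁻ = 0 := negPart_eq_zero.mpr h
      rw [hq]
      constructor
      · refine max_le ?_ ?_
        · calc u + (b (i+1))⁺ ≤ u + v := by linarith
            _ ≤ Nat.fib (i+2) := hsum
        · calc v + 0 = v := by ring
            _ ≤ (Nat.fib (i+1) : ℝ) := hvfib
            _ ≤ Nat.fib (i+2) := by exact_mod_cast Nat.fib_mono (by omega)
      · rw [hfib3]; linarith
    · have hp : (b (i+1))⁺ = 0 := posPart_eq_zero.mpr h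
      rw [hp]
      constructor
      · refine max_le ?_ ?_
        · calc u + 0 = u := by ring
            _ ≤ (Nat.fib (i+1) : ℝ) := hufib
            _ ≤ Nat.fib (i+2) := by exact_mod_cast Nat.fib_mono (by omega)
        · calc v + (b (i+1))⁻ ≤ v + u := by linarith
            _ ≤ Nat.fib (i+2) := by linarith [hsum]
      · rw [hfib3]; linarith

lemma fib_inv_abs_sum (b : ℕ → ℝ) (hb0 : b 0 = 1)
    (hb : ∀ t, 1 ≤ t → ∃ e : ℕ → ℝ, (∀ s, e s = 0 ∨ e s = 1) ∧
      b t = -∑ s ∈ Finset.range t, e s * b s) (m : ℕ) :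
    ∑ k ∈ Finset.range m, |b k| ≤ Nat.fib (m+1) := by
  cases m with
  | zero => simp
  | succ i =>
    have := (fib_inv_aux b hb0 hb i).2
    calc ∑ k ∈ Finset.range (i+1), |b k|
        = ∑ k ∈ Finset.range (i+1), ((b k)⁺ + (b k)⁻) := by
          refine Finset.sum_congr rfl fun k _ => (posPart_add_negPart _).symm
      _ = (∑ k ∈ Finset.range (i+1), (b k)⁺) + ∑ k ∈ Finset.range (i+1), (b k)⁻ :=
          Finset.sum_add_distrib
      _ ≤ Nat.fib (i+2) := this

lemma fib_inv_abs_sum_rev (b : ℕ → ℝ) (m : ℕ) (hbm : b m = 1)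
    (hrec : ∀ j, j < m → ∃ e : ℕ → ℝ, (∀ s, e s = 0 ∨ e s = 1) ∧
      b j = -∑ k ∈ Finset.Ioc j m, e k * b k) :
    ∑ j ∈ Finset.range (m+1), |b j| ≤ Nat.fib (m+2) := by
  set c : ℕ → ℝ := fun t => if t ≤ m then b (m - t) else 0 with hc
  have hc0 : c 0 = 1 := by simp [hc, hbm]
  have hcrec : ∀ t, 1 ≤ t → ∃ e : ℕ → ℝ, (∀ s, e s = 0 ∨ e s = 1) ∧
      c t = -∑ s ∈ Finset.range t, e s * c s := by
    intro t ht
    by_cases htm : t ≤ m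
    · obtain ⟨e, he, heq⟩ := hrec (m - t) (by omega)
      refine ⟨fun s => e (m - s), fun s => he _, ?_⟩
      have : c t = b (m - t) := by simp [hc, htm]
      rw [this, heq]
      congr 1
      refine Finset.sum_nbij' (fun k => m - k) (fun s => m - s) ?_ ?_ ?_ ?_ ?_
      · intro k hk; simp only [Finset.mem_Ioc] at hk; simp only [Finset.mem_range]; omega
      · intro s hs; simp only [Finset.mem_range] at hs; simp only [Finset.mem_Ioc]; omega
      · intro k hk; simp only [Finset.mem_Ioc] at hk; omega
      · intro s hs; simp only [Finset.mem_range] at hs; omega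
      · intro k hk; simp only [Finset.mem_Ioc] at hk
        have h1 : m - (m - k) = k := by omega
        have h2 : m - k ≤ m := by omega
        simp [hc, h1, h2]
    · exact ⟨fun _ => 0, fun _ => Or.inl rfl, by simp [hc, htm]⟩
  have key := fib_inv_abs_sum c hc0 hcrec (m+1)
  calc ∑ j ∈ Finset.range (m+1), |b j|
      = ∑ t ∈ Finset.range (m+1), |c t| := by
        refine Finset.sum_nbij' (fun j => m - j) (fun t => m - t) ?_ ?_ ?_ ?_ ?_
        · intro j hj; simp only [Finset.mem_range] at *; omega
        · intro t ht; simp only [Finset.mem_range] at *; omega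
        · intro j hj; simp only [Finset.mem_range] at hj; omega
        · intro t ht; simp only [Finset.mem_range] at ht; omega
        · intro j hj; simp only [Finset.mem_range] at hj
          have h1 : m - j ≤ m := by omega
          have h2 : m - (m - j) = j := by omega
          simp [hc, h1, h2]
    _ ≤ Nat.fib (m+2) := key

lemma fib_shift_sum : ∀ N : ℕ, (∑ s ∈ Finset.range N, (Nat.fib (s+2) : ℝ))
    = (Nat.fib (N+3) : ℝ) - 2 := by
  intro N
  induction N with
  | zero => norm_num [show Nat.fib 3 = 2 from rfl]
  | succ N ih =>
    rw [Finset.sum_range_succ, ih]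
    have := Nat.fib_add_two (n := N+2)
    push_cast [this]; ring

/-! ### Möbius function lemmas -/

section MuMatrix
variable {P : Type*} [Lattice P] [OrderBot P] [LocallyFiniteOrder P]
    [DecidableRel ((· ≤ ·) : P → P → Prop)]
    (mu : P → P → ℂ)
    (hmu_self : ∀ p, mu p p = 1)
    (hmu_lt : ∀ p q : P, p < q → mu p q = -∑ r ∈ Finset.Ico p q, mu p r)
    (hmu_nle : ∀ p q : P, ¬ p ≤ q → mu p q = 0)

include hmu_self in
lemma sum_Icc_mu_self (p : P) : ∑ z ∈ Finset.Icc p p, mu p z = 1 := by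
  simp [hmu_self]

include hmu_lt in
lemma sum_Icc_mu_lt (p q : P) (hlt : p < q) : ∑ z ∈ Finset.Icc p q, mu p z = 0 := by
  rw [Finset.Icc_eq_cons_Ico (le_of_lt hlt), Finset.sum_cons, hmu_lt p q hlt]
  ring

include hmu_self hmu_lt hmu_nle in
lemma mu_im_zero : ∀ p q : P, (mu p q).im = 0 := by
  have H : ∀ N (p q : P), (Finset.Icc p q).card ≤ N → (mu p q).im = 0 := by
    intro N
    induction N with
    | zero =>
      intro p q hpq
      by_cases h : p ≤ q
      · exfalso
        have hmem : p ∈ Finset.Icc p q := Finset.mem_Icc.mpr ⟨le_refl p, h⟩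
        have := Finset.card_pos.mpr ⟨p, hmem⟩
        omega
      · rw [hmu_nle p q h]; simp
    | succ N ih =>
      intro p q hpq
      by_cases h : p ≤ q
      · rcases eq_or_lt_of_le h with rfl | hlt
        · rw [hmu_self]; simp
        · rw [hmu_lt p q hlt]
          simp only [Complex.neg_im, Complex.im_sum, neg_eq_zero]
          refine Finset.sum_eq_zero fun r hr => ?_
          rw [Finset.mem_Ico] at hr
          refine ih p r ?_
          have hsub : Finset.Icc p r ⊆ Finset.Icc p q :=
            Finset.Icc_subset_Icc le_rfl (le_of_lt hr.2)
          have hq : q ∈ Finset.Icc p q := Finset.mem_Icc.mpr ⟨h, le_refl q⟩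
          have hqn : q ∉ Finset.Icc p r := by
            intro hmem
            exact absurd (lt_of_le_of_lt (Finset.mem_Icc.mp hmem).2 hr.2) (lt_irrefl q)
          have : (Finset.Icc p r).card < (Finset.Icc p q).card :=
            Finset.card_lt_card ⟨hsub, fun hs => hqn (hs hq)⟩
          omega
      · rw [hmu_nle p q h]; simp
  exact fun p q => H (Finset.Icc p q).card p q le_rfl

include hmu_self hmu_lt hmu_nle in
lemma abs_mu_eq (p q : P) : ‖mu p q‖ = |(mu p q).re| := by
  have h : mu p q = ((mu p q).re : ℂ) :=
    Complex.ext rfl (by simp [mu_im_zero mu hmu_self hmu_lt hmu_nle p q])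
  conv_lhs => rw [h]
  rw [Complex.norm_real, Real.norm_eq_abs]

variable {n : ℕ} (x : Fin n → P) (hinj : Function.Injective x)
    (hord : ∀ i j, x i ≤ x j → i ≤ j)
    (hlower : ∀ i (z : P), z ≤ x i → ∃ k, x k = z)

include hmu_self hmu_lt hmu_nle hinj hlower in
lemma EM_one :
    (Matrix.of fun i j : Fin n => if x j ≤ x i then (1:ℂ) else 0) *
      (Matrix.of fun i j : Fin n => mu (x j) (x i)) = 1 := by
  classical
  ext i j
  rw [Matrix.mul_apply]
  have step1 : ∑ k, (Matrix.of fun i j : Fin n => if x j ≤ x i then (1:ℂ) else 0) i k *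
      (Matrix.of fun i j : Fin n => mu (x j) (x i)) k j
      = ∑ k ∈ Finset.univ.filter (fun k => x k ≤ x i), mu (x j) (x k) := by
    rw [Finset.sum_filter]
    refine Finset.sum_congr rfl fun k _ => ?_
    by_cases h : x k ≤ x i <;> simp [h]
  rw [step1]
  have step2 : ∑ k ∈ Finset.univ.filter (fun k => x k ≤ x i), mu (x j) (x k)
      = ∑ z ∈ Finset.Icc ⊥ (x i), mu (x j) z := by
    refine Finset.sum_bij (fun k _ => x k) ?_ ?_ ?_ ?_
    · intro k hk
      rw [Finset.mem_filter] at hk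
      exact Finset.mem_Icc.mpr ⟨bot_le, hk.2⟩
    · intro a ha b hb hab
      exact hinj hab
    · intro z hz
      rw [Finset.mem_Icc] at hz
      obtain ⟨k, hk⟩ := hlower i z hz.2
      exact ⟨k, Finset.mem_filter.mpr ⟨Finset.mem_univ k, hk ▸ hz.2⟩, hk⟩
    · intro k hk; rfl
  rw [step2]
  by_cases hij : x j ≤ x i
  · have step3 : ∑ z ∈ Finset.Icc ⊥ (x i), mu (x j) z
        = ∑ z ∈ Finset.Icc (x j) (x i), mu (x j) z := by
      refine (Finset.sum_subset (Finset.Icc_subset_Icc bot_le le_rfl) ?_).symm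
      intro z hz hz'
      rw [Finset.mem_Icc] at hz
      refine hmu_nle _ _ fun hle => hz' (Finset.mem_Icc.mpr ⟨hle, hz.2⟩)
    rw [step3]
    rcases eq_or_ne j i with rfl | hne
    · rw [sum_Icc_mu_self mu hmu_self, Matrix.one_apply_eq]
    · have hxne : x j ≠ x i := fun h => hne (hinj h)
      rw [sum_Icc_mu_lt mu hmu_lt _ _ (lt_of_le_of_ne hij hxne),
        Matrix.one_apply_ne (Ne.symm hne)]
  · have hne : j ≠ i := fun h => hij (h ▸ le_rfl)
    rw [Matrix.one_apply_ne (Ne.symm hne)]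
    refine Finset.sum_eq_zero fun z hz => ?_
    rw [Finset.mem_Icc] at hz
    exact hmu_nle _ _ fun hle => hij (le_trans hle hz.2)

include hmu_self hmu_lt hmu_nle in
lemma mobius_inversion (f : P → ℂ) (y : P) :
    ∑ z ∈ Finset.Icc ⊥ y, (∑ w ∈ Finset.Icc ⊥ z, f w * mu w z) = f y := by
  classical
  have step1 : ∑ z ∈ Finset.Icc ⊥ y, (∑ w ∈ Finset.Icc ⊥ z, f w * mu w z)
      = ∑ z ∈ Finset.Icc ⊥ y, ∑ w ∈ Finset.Icc ⊥ y,
          if w ≤ z then f w * mu w z else 0 := by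
    refine Finset.sum_congr rfl fun z hz => ?_
    rw [Finset.mem_Icc] at hz
    rw [← Finset.sum_filter]
    congr 1
    ext w
    simp only [Finset.mem_Icc, Finset.mem_filter, bot_le, true_and]
    exact ⟨fun h => ⟨le_trans h hz.2, h⟩, fun h => h.2⟩
  rw [step1, Finset.sum_comm]
  have step2 : ∀ w ∈ Finset.Icc ⊥ y,
      (∑ z ∈ Finset.Icc ⊥ y, if w ≤ z then f w * mu w z else 0)
      = f w * ∑ z ∈ Finset.Icc w y, mu w z := by
    intro w hw
    rw [Finset.mem_Icc] at hw
    rw [← Finset.sum_filter]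
    have : (Finset.Icc ⊥ y).filter (fun z => w ≤ z) = Finset.Icc w y := by
      ext z
      simp only [Finset.mem_Icc, Finset.mem_filter, bot_le, true_and]
      exact ⟨fun h => ⟨h.2, h.1⟩, fun h => ⟨h.2, h.1⟩⟩
    rw [this, Finset.mul_sum]
  rw [Finset.sum_congr rfl step2]
  rw [Finset.sum_eq_single y]
  · rw [sum_Icc_mu_self mu hmu_self, mul_one]
  · intro w hw hne
    rw [Finset.mem_Icc] at hw
    rw [sum_Icc_mu_lt mu hmu_lt _ _ (lt_of_le_of_ne hw.2 hne), mul_zero]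
  · intro h
    exact absurd (Finset.mem_Icc.mpr ⟨bot_le, le_rfl⟩) h

include hinj hord hlower in
lemma partition_sum (g : P → ℂ) (i0 : Fin n) (m : P) (hm : m ≤ x i0) :
    ∑ k ∈ Finset.univ.filter (fun k => x k ≤ m),
      ∑ z ∈ (Finset.Icc ⊥ (x k)).filter (fun z => ∀ j, j < k → ¬ z ≤ x j), g z
    = ∑ z ∈ Finset.Icc ⊥ m, g z := by
  classical
  have hdisj : (↑(Finset.univ.filter (fun k => x k ≤ m)) : Set (Fin n)).PairwiseDisjoint
      (fun k => (Finset.Icc ⊥ (x k)).filter (fun z => ∀ j, j < k → ¬ z ≤ x j)) := by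
    intro a _ b _ hab
    simp only [Function.onFun]
    rw [Finset.disjoint_left]
    intro z hza hzb
    rw [Finset.mem_filter, Finset.mem_Icc] at hza hzb
    rcases lt_or_gt_of_ne hab with h | h
    · exact hzb.2 a h hza.1.2
    · exact hza.2 b h hzb.1.2
  rw [← Finset.sum_biUnion hdisj]
  congr 1
  ext z
  simp only [Finset.mem_biUnion, Finset.mem_filter, Finset.mem_Icc, Finset.mem_univ,
    true_and, bot_le, true_and]
  constructor
  · rintro ⟨k, hk, hzk, -⟩
    exact le_trans hzk hk
  · intro hzm
    obtain ⟨k, hk⟩ := hlower i0 z (le_trans hzm hm)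
    refine ⟨k, hk ▸ hzm, le_of_eq hk.symm, fun j hj hzj => ?_⟩
    have : x k ≤ x j := hk ▸ hzj
    exact absurd (hord k j this) (not_le.mpr hj)

include hmu_self hmu_lt hmu_nle hinj hord hlower in
lemma row_bound
    (hME : (Matrix.of fun i j : Fin n => mu (x j) (x i)) *
      (Matrix.of fun i j : Fin n => if x j ≤ x i then (1:ℂ) else 0) = 1)
    (i : Fin n) :
    ∑ j : Fin n, ‖mu (x j) (x i)‖ ≤ Nat.fib ((i:ℕ)+2) := by
  classical
  set b : ℕ → ℝ := fun t => if h : t < n then (mu (x ⟨t,h⟩) (x i)).re else 0 with hb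
  have hbm : b (i:ℕ) = 1 := by
    simp [hb, i.isLt, Fin.eta, hmu_self]
  have hrec : ∀ t, t < (i:ℕ) → ∃ e : ℕ → ℝ, (∀ s, e s = 0 ∨ e s = 1) ∧
      b t = -∑ k ∈ Finset.Ioc t (i:ℕ), e k * b k := by
    intro t ht
    have htn : t < n := lt_trans ht i.isLt
    set j : Fin n := ⟨t, htn⟩ with hj
    have hjilt : j < i := by
      rw [Fin.lt_def]; exact ht
    have hne : i ≠ j := fun h => absurd (h ▸ hjilt) (lt_irrefl i)
    have hent : ∑ k : Fin n, mu (x k) (x i) * (if x j ≤ x k then (1:ℂ) else 0) = 0 := by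
      have hh := congrFun (congrFun hME i) j
      rw [Matrix.mul_apply, Matrix.one_apply_ne hne] at hh
      simpa using hh
    set F : ℕ → ℂ := fun s => if h : s < n then
      mu (x ⟨s,h⟩) (x i) * (if x j ≤ x ⟨s,h⟩ then (1:ℂ) else 0) else 0 with hF
    have hFsum : ∑ s ∈ Finset.range n, F s = 0 := by
      rw [← Fin.sum_univ_eq_sum_range F n, ← hent]
      refine Finset.sum_congr rfl fun k _ => ?_
      simp [hF, k.isLt]
    have hIcc : ∑ s ∈ Finset.Icc t (i:ℕ), F s = 0 := by
      rw [← hFsum]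
      refine Finset.sum_subset ?_ ?_
      · intro s hs
        rw [Finset.mem_Icc] at hs
        rw [Finset.mem_range]
        exact lt_of_le_of_lt hs.2 i.isLt
      · intro s hs hs'
        rw [Finset.mem_range] at hs
        rw [Finset.mem_Icc] at hs'
        by_cases hle : x j ≤ x ⟨s, hs⟩
        · by_cases hxk : x ⟨s, hs⟩ ≤ x i
          · exfalso
            have h1 : t ≤ s := hord j ⟨s, hs⟩ hle
            have h2 : s ≤ (i:ℕ) := hord ⟨s, hs⟩ i hxk
            exact hs' ⟨h1, h2⟩
          · simp [hF, hs, hmu_nle _ _ hxk]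
        · simp [hF, hs, hle]
    rw [Finset.Icc_eq_cons_Ioc (le_of_lt ht), Finset.sum_cons] at hIcc
    have hFt : F t = mu (x j) (x i) := by
      simp [hF, htn, hj]
    have hmain : mu (x j) (x i) = -∑ s ∈ Finset.Ioc t (i:ℕ), F s := by
      rw [← hFt]; linear_combination hIcc
    refine ⟨fun s => if h : s < n then (if x j ≤ x ⟨s,h⟩ then (1:ℝ) else 0) else 0,
      fun s => ?_, ?_⟩
    · by_cases h : s < n
      · by_cases h2 : x j ≤ x ⟨s,h⟩ <;> simp [h, h2]
      · simp [h]
    · have hbt : b t = (mu (x j) (x i)).re := by simp [hb, htn, hj]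
      rw [hbt, hmain]
      rw [Complex.neg_re, Complex.re_sum]
      congr 1
      refine Finset.sum_congr rfl fun s hs => ?_
      rw [Finset.mem_Ioc] at hs
      have hsn : s < n := lt_of_le_of_lt hs.2 i.isLt
      by_cases hle : x j ≤ x ⟨s, hsn⟩
      · simp [hF, hb, hsn, hle]
      · simp [hF, hb, hsn, hle]
  have key := fib_inv_abs_sum_rev b (i:ℕ) hbm hrec
  have hrow : ∑ j : Fin n, ‖mu (x j) (x i)‖
      = ∑ s ∈ Finset.range n, |b s| := by
    rw [← Fin.sum_univ_eq_sum_range (fun s => |b s|) n]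
    refine Finset.sum_congr rfl fun k _ => ?_
    rw [abs_mu_eq mu hmu_self hmu_lt hmu_nle]
    simp [hb, k.isLt]
  rw [hrow]
  have hsplit : ∑ s ∈ Finset.range n, |b s| = ∑ s ∈ Finset.range ((i:ℕ)+1), |b s| := by
    symm
    refine Finset.sum_subset ?_ ?_
    · intro s hs
      rw [Finset.mem_range] at *
      have := i.isLt; omega
    · intro s hs hs'
      rw [Finset.mem_range] at hs hs'
      have hsi : (i:ℕ) < s := by omega
      have hnle : ¬ x ⟨s, hs⟩ ≤ x i := by
        intro hle
        have h5 : s ≤ (i:ℕ) := hord ⟨s, hs⟩ i hle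
        omega
      simp [hb, hs, hmu_nle _ _ hnle]
  rw [hsplit]
  exact key

end MuMatrix

/-- **local upper bound, dual problem.** For lower closed `S`, every
`(S)_f`-eigenvalue `λ` of `[S]_f` satisfies
`|λ| ≤ C_f m_f⁻¹ F (n+1) (F (n+3) − 2)`, where `F` is the Fibonacci sequence with
`F 1 = F 2 = 1`, `C_f = max_{i,j} |f (x i ∨ x j)|` and `m_f = min_i |d i|`. -/
theorem local_upper_bound_join_wrt_meet
    {P : Type*} [Lattice P] [OrderBot P] [LocallyFiniteOrder P]
    [DecidableRel ((· ≤ ·) : P → P → Prop)]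
    (mu : P → P → ℂ)
    (hmu_self : ∀ p, mu p p = 1)
    (hmu_lt : ∀ p q : P, p < q → mu p q = -∑ r ∈ Finset.Ico p q, mu p r)
    (hmu_nle : ∀ p q : P, ¬ p ≤ q → mu p q = 0)
    (f : P → ℂ) (hf : ∀ p, f p ≠ 0)
    (hsemi : ∀ p q : P, f (p ⊓ q) * f (p ⊔ q) = f p * f q)
    {n : ℕ} (hn : 0 < n)
    (x : Fin n → P) (hinj : Function.Injective x)
    (hord : ∀ i j, x i ≤ x j → i ≤ j)
    (hlower : ∀ i (z : P), z ≤ x i → ∃ k, x k = z)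
    (d : Fin n → ℂ)
    (hd : ∀ i, d i = ∑ z ∈ (Finset.Icc ⊥ (x i)).filter
        (fun z => ∀ j, j < i → ¬ z ≤ x j),
      ∑ w ∈ Finset.Icc ⊥ z, f w * mu w z)
    (hd0 : ∀ i, d i ≠ 0)
    (lam : ℂ) (v : Fin n → ℂ) (hv : v ≠ 0)
    (heig : (Matrix.of fun i j => f (x i ⊔ x j)).mulVec v =
      lam • (Matrix.of fun i j => f (x i ⊓ x j)).mulVec v) :
    ‖lam‖ ≤
      (⨆ p : Fin n × Fin n, ‖f (x p.1 ⊔ x p.2)‖) *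
        (⨅ i, ‖d i‖)⁻¹ *
        ((Nat.fib (n + 1) : ℝ) * ((Nat.fib (n + 3) : ℝ) - 2)) := by
  classical
  have hnonempty : Nonempty (Fin n) := ⟨⟨0, hn⟩⟩
  set E : Matrix (Fin n) (Fin n) ℂ :=
    Matrix.of fun i j => if x j ≤ x i then (1:ℂ) else 0 with hE
  set M : Matrix (Fin n) (Fin n) ℂ := Matrix.of fun i j => mu (x j) (x i) with hM
  set J : Matrix (Fin n) (Fin n) ℂ := Matrix.of fun i j => f (x i ⊔ x j) with hJ
  set A : Matrix (Fin n) (Fin n) ℂ := Matrix.of fun i j => f (x i ⊓ x j) with hA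
  have hEM : E * M = 1 := EM_one mu hmu_self hmu_lt hmu_nle x hinj hlower
  have hME : M * E = 1 := mul_eq_one_comm.mp hEM
  -- factorization of the meet matrix
  have hfact : A = E * Matrix.diagonal d * Eᵀ := by
    ext i j
    have h1 : (E * Matrix.diagonal d * Eᵀ) i j = ∑ k, (E i k * d k) * E j k := by
      rw [Matrix.mul_apply]
      refine Finset.sum_congr rfl fun k _ => ?_
      rw [Matrix.mul_diagonal, Matrix.transpose_apply]
    have h2 : ∑ k, (E i k * d k) * E j k
        = ∑ k ∈ Finset.univ.filter (fun k => x k ≤ x i ⊓ x j), d k := by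
      rw [Finset.sum_filter]
      refine Finset.sum_congr rfl fun k _ => ?_
      by_cases ha : x k ≤ x i <;> by_cases hb : x k ≤ x j <;>
        simp [hE, ha, hb, le_inf_iff]
    have h3 : ∑ k ∈ Finset.univ.filter (fun k => x k ≤ x i ⊓ x j), d k
        = f (x i ⊓ x j) := by
      rw [Finset.sum_congr rfl (fun k _ => hd k)]
      rw [partition_sum x hinj hord hlower _ i _ inf_le_left]
      exact mobius_inversion mu hmu_self hmu_lt hmu_nle f (x i ⊓ x j)
    rw [h1, h2, h3]
    rfl
  obtain ⟨w, hw⟩ : ∃ w : Fin n → ℂ, w = Eᵀ.mulVec v := ⟨_, rfl⟩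
  have hvw : v = Mᵀ.mulVec w := by
    rw [hw, Matrix.mulVec_mulVec, ← Matrix.transpose_mul, hEM, Matrix.transpose_one,
      Matrix.one_mulVec]
  have hwne : w ≠ 0 := by
    intro h0
    apply hv
    rw [hvw, h0, Matrix.mulVec_zero]
  have hkey : (M * J * Mᵀ).mulVec w = lam • (Matrix.diagonal d).mulVec w := by
    have e1 : (M * J * Mᵀ).mulVec w = M.mulVec (J.mulVec v) := by
      rw [hvw, Matrix.mulVec_mulVec, Matrix.mulVec_mulVec, Matrix.mul_assoc]
    have e2 : A.mulVec v = E.mulVec ((Matrix.diagonal d).mulVec w) := by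
      rw [hfact, hw, Matrix.mulVec_mulVec, Matrix.mulVec_mulVec, Matrix.mul_assoc]
    rw [e1, heig]
    show M.mulVec (lam • A.mulVec v) = _
    rw [Matrix.mulVec_smul, e2]
    congr 1
    rw [Matrix.mulVec_mulVec, hME, Matrix.one_mulVec]
  -- row sums
  set R : Fin n → ℝ := fun i => ∑ j : Fin n, ‖mu (x j) (x i)‖ with hR
  have hR0 : ∀ i, 0 ≤ R i := fun i =>
    Finset.sum_nonneg fun j _ => norm_nonneg _
  have hRfib : ∀ i : Fin n, R i ≤ (Nat.fib ((i:ℕ)+2) : ℝ) :=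
    fun i => row_bound mu hmu_self hmu_lt hmu_nle x hinj hord hlower hME i
  have hRn : ∀ i, R i ≤ (Nat.fib (n+1) : ℝ) := by
    intro i
    refine le_trans (hRfib i) ?_
    exact_mod_cast Nat.fib_mono (by have := i.isLt; omega)
  have hRsum : ∑ i : Fin n, R i ≤ (Nat.fib (n+3) : ℝ) - 2 := by
    calc ∑ i : Fin n, R i ≤ ∑ i : Fin n, (Nat.fib ((i:ℕ)+2) : ℝ) :=
          Finset.sum_le_sum fun i _ => hRfib i
      _ = ∑ s ∈ Finset.range n, (Nat.fib (s+2) : ℝ) :=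
          Fin.sum_univ_eq_sum_range (fun s => (Nat.fib (s+2) : ℝ)) n
      _ = (Nat.fib (n+3) : ℝ) - 2 := fib_shift_sum n
  -- bound on entries of J
  set C : ℝ := ⨆ p : Fin n × Fin n, ‖f (x p.1 ⊔ x p.2)‖ with hC
  have hCb : ∀ k l : Fin n, ‖J k l‖ ≤ C := by
    intro k l
    rw [hC]
    exact le_ciSup (f := fun p : Fin n × Fin n => ‖f (x p.1 ⊔ x p.2)‖)
      (Finite.bddAbove_range _) (k, l)
  have hC0 : 0 ≤ C := le_trans (norm_nonneg _) (hCb ⟨0, hn⟩ ⟨0, hn⟩)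
  -- entry bound on M * J * Mᵀ
  have hMJM : ∀ i j, ‖(M * J * Mᵀ) i j‖ ≤ C * R i * R j := by
    intro i j
    have hRM : ∀ i : Fin n, ∑ k : Fin n, ‖M i k‖ = R i := fun i => rfl
    calc ‖(M * J * Mᵀ) i j‖
        = ‖∑ l, (∑ k, M i k * J k l) * M j l‖ := by
          simp only [Matrix.mul_apply, Matrix.transpose_apply]
      _ ≤ ∑ l, ‖(∑ k, M i k * J k l) * M j l‖ :=
          norm_sum_le _ _
      _ ≤ ∑ l, (C * R i) * ‖M j l‖ := by
          refine Finset.sum_le_sum fun l _ => ?_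
          rw [norm_mul]
          refine mul_le_mul_of_nonneg_right ?_ (norm_nonneg _)
          calc ‖∑ k, M i k * J k l‖
              ≤ ∑ k, ‖M i k * J k l‖ := norm_sum_le _ _
            _ = ∑ k, ‖M i k‖ * ‖J k l‖ := by
                refine Finset.sum_congr rfl fun k _ => norm_mul _ _
            _ ≤ ∑ k, ‖M i k‖ * C :=
                Finset.sum_le_sum fun k _ =>
                  mul_le_mul_of_nonneg_left (hCb k l) (norm_nonneg _)
            _ = (∑ k, ‖M i k‖) * C := by rw [← Finset.sum_mul]
            _ = C * R i := by rw [hRM i, mul_comm]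
      _ = (C * R i) * ∑ l, ‖M j l‖ := by rw [← Finset.mul_sum]
      _ = C * R i * R j := by rw [hRM j]
  -- pick maximizing index
  obtain ⟨i0, hi0⟩ := Finite.exists_max (fun j => ‖w j‖)
  have hwi0 : 0 < ‖w i0‖ := by
    rcases eq_or_ne (w i0) 0 with h | h
    · exfalso
      apply hwne
      funext j
      have hj := hi0 j
      rw [h] at hj
      simp only [norm_zero] at hj
      exact norm_eq_zero.mp (le_antisymm hj (norm_nonneg _))
    · exact (norm_pos_iff.mpr h)
  -- the main estimate
  have hcomp := congrFun hkey i0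
  have hlhs : (M * J * Mᵀ).mulVec w i0 = ∑ j, (M * J * Mᵀ) i0 j * w j := by
    rw [Matrix.mulVec]
    rfl
  have hrhs : (lam • (Matrix.diagonal d).mulVec w) i0 = lam * (d i0 * w i0) := by
    rw [Pi.smul_apply, Matrix.mulVec_diagonal]
    simp [smul_eq_mul]
  rw [hlhs, hrhs] at hcomp
  have hest : ‖lam‖ * ‖d i0‖ * ‖w i0‖
      ≤ (C * (Nat.fib (n+1) : ℝ) * ((Nat.fib (n+3) : ℝ) - 2)) * ‖w i0‖ := by
    have e1 : ‖lam‖ * ‖d i0‖ * ‖w i0‖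
        = ‖∑ j, (M * J * Mᵀ) i0 j * w j‖ := by
      rw [hcomp, norm_mul, norm_mul, mul_assoc]
    rw [e1]
    calc ‖∑ j, (M * J * Mᵀ) i0 j * w j‖
        ≤ ∑ j, ‖(M * J * Mᵀ) i0 j * w j‖ := norm_sum_le _ _
      _ ≤ ∑ j, (C * R i0 * R j) * ‖w i0‖ := by
          refine Finset.sum_le_sum fun j _ => ?_
          rw [norm_mul]
          refine mul_le_mul (hMJM i0 j) (hi0 j) (norm_nonneg _) ?_
          exact mul_nonneg (mul_nonneg hC0 (hR0 i0)) (hR0 j)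
      _ = (C * R i0 * ∑ j, R j) * ‖w i0‖ := by
          rw [← Finset.sum_mul, ← Finset.mul_sum]
      _ ≤ (C * (Nat.fib (n+1) : ℝ) * ((Nat.fib (n+3) : ℝ) - 2)) * ‖w i0‖ := by
          refine mul_le_mul_of_nonneg_right ?_ (norm_nonneg _)
          refine mul_le_mul ?_ hRsum (Finset.sum_nonneg fun j _ => hR0 j)
            (mul_nonneg hC0 (by positivity))
          exact mul_le_mul_of_nonneg_left (hRn i0) hC0
  have h2 : ‖lam‖ * ‖d i0‖
      ≤ C * (Nat.fib (n+1) : ℝ) * ((Nat.fib (n+3) : ℝ) - 2) :=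
    le_of_mul_le_mul_right hest hwi0
  set mf : ℝ := ⨅ i, ‖d i‖ with hmf
  have hmf_le : mf ≤ ‖d i0‖ := by
    rw [hmf]
    exact ciInf_le (Finite.bddBelow_range _) i0
  have hmf_pos : 0 < mf := by
    obtain ⟨i1, hi1⟩ := Finite.exists_min (fun i => ‖d i‖)
    have hle : ‖d i1‖ ≤ mf := by
      rw [hmf]
      exact le_ciInf hi1
    exact lt_of_lt_of_le (norm_pos_iff.mpr (hd0 i1)) hle
  have hdpos : 0 < ‖d i0‖ := norm_pos_iff.mpr (hd0 i0)
  have hfib2 : (2:ℝ) ≤ (Nat.fib (n+3) : ℝ) := by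
    have h3 : (2:ℕ) ≤ Nat.fib (n+3) := by
      have := Nat.fib_mono (show 3 ≤ n+3 by omega)
      simpa [show Nat.fib 3 = 2 from rfl] using this
    exact_mod_cast h3
  have hKnn : 0 ≤ C * (Nat.fib (n+1) : ℝ) * ((Nat.fib (n+3) : ℝ) - 2) := by
    have h4 : (0:ℝ) ≤ (Nat.fib (n+1) : ℝ) := by positivity
    exact mul_nonneg (mul_nonneg hC0 h4) (by linarith)
  have hlam : ‖lam‖ ≤
      (C * (Nat.fib (n+1) : ℝ) * ((Nat.fib (n+3) : ℝ) - 2)) * (‖d i0‖)⁻¹ := by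
    have := (le_div_iff₀ hdpos).mpr h2
    rwa [div_eq_mul_inv] at this
  calc ‖lam‖
      ≤ (C * (Nat.fib (n+1) : ℝ) * ((Nat.fib (n+3) : ℝ) - 2)) * (‖d i0‖)⁻¹ :=
        hlam
    _ ≤ (C * (Nat.fib (n+1) : ℝ) * ((Nat.fib (n+3) : ℝ) - 2)) * mf⁻¹ :=
        mul_le_mul_of_nonneg_left (inv_anti₀ hmf_pos hmf_le) hKnn
    _ = C * mf⁻¹ * ((Nat.fib (n+1) : ℝ) * ((Nat.fib (n+3) : ℝ) - 2)) := by ring
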